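/- Let n ≥ 1, let (Y,d) be a nonempty metric space, let G: Y → ℝⁿ be a Lipschitz map, let v₁,…,vₙ be linearly independent vectors in ℝⁿ, and let L ≥ 1. Suppose that for every z ∈ Y and every i ∈ {1,…,n} there exists an L-bi-Lipschitz line l: ℝ → Y with l(0) = z and G(l(t)) = G(z) + t·vᵢ for all t ∈ ℝ. Then G is a surjective Lipschitz quotient map: G(Y) = ℝⁿ and there exists c > 0 such that G(B(z,r)) ⊇ B(G(z), cr) for every z ∈ Y and every r > 0. -/
import Mathlib


open Metric

/-- If a Lipschitz map `G : Y → ℝⁿ` admits, through every point, `L`-bi-Lipschitz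
lines along which it moves linearly in `n` linearly independent directions, then
`G` is a surjective Lipschitz quotient map. -/
theorem lipschitz_quotient_of_biLipschitz_lines
    {Y : Type*} [MetricSpace Y] [Nonempty Y] (n : ℕ) (hn : 1 ≤ n)
    (G : Y → EuclideanSpace ℝ (Fin n)) (hG : ∃ K : NNReal, LipschitzWith K G)
    (v : Fin n → EuclideanSpace ℝ (Fin n)) (hv : LinearIndependent ℝ v)
    (L : ℝ) (hL : 1 ≤ L)
    (h : ∀ (z : Y) (i : Fin n), ∃ l : ℝ → Y, l 0 = z ∧
      (∀ s t : ℝ, L⁻¹ * |s - t| ≤ dist (l s) (l t) ∧ dist (l s) (l t) ≤ L * |s - t|) ∧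
      (∀ t : ℝ, G (l t) = G z + t • v i)) :
    Function.Surjective G ∧ ∃ c : ℝ, 0 < c ∧
      ∀ (z : Y) (r : ℝ), 0 < r → ball (G z) (c * r) ⊆ G '' ball z r := by
  classical
  have hL0 : (0:ℝ) ≤ L := le_trans zero_le_one hL
  haveI : Nonempty (Fin n) := Fin.pos_iff_nonempty.mp hn
  have hcard : Fintype.card (Fin n) = Module.finrank ℝ (EuclideanSpace ℝ (Fin n)) := by simp
  set b := basisOfLinearIndependentOfCardEqFinrank hv hcard with hb
  have hbv : ⇑b = v := coe_basisOfLinearIndependentOfCardEqFinrank hv hcard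
  -- reachability along finitely many directions
  have reach : ∀ (t : Fin n → ℝ) (S : Finset (Fin n)) (z : Y),
      ∃ y, G y = G z + ∑ i ∈ S, t i • v i ∧ dist z y ≤ L * ∑ i ∈ S, |t i| := by
    intro t S
    induction S using Finset.induction_on with
    | empty => intro z; exact ⟨z, by simp, by simp⟩
    | @insert i S hi IH =>
      intro z
      obtain ⟨l, hl0, hlip, hline⟩ := h z i
      obtain ⟨y, hy, hd⟩ := IH (l (t i))
      refine ⟨y, ?_, ?_⟩
      · rw [hy, hline, Finset.sum_insert hi, add_assoc]
      · have h1 : dist z (l (t i)) ≤ L * |t i| := by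
          have h2 := (hlip 0 (t i)).2
          rw [hl0] at h2
          simpa [abs_sub_comm] using h2
        calc dist z y ≤ dist z (l (t i)) + dist (l (t i)) y := dist_triangle _ _ _
          _ ≤ L * |t i| + L * ∑ i ∈ S, |t i| := add_le_add h1 hd
          _ = L * ∑ j ∈ insert i S, |t j| := by rw [Finset.sum_insert hi, mul_add]
  -- coordinate functionals
  set clm : Fin n → EuclideanSpace ℝ (Fin n) →L[ℝ] ℝ :=
    fun i => LinearMap.toContinuousLinearMap (b.coord i) with hclm
  set C : ℝ := ∑ i, ‖clm i‖ with hC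
  have hC0 : 0 ≤ C := Finset.sum_nonneg fun i _ => norm_nonneg _
  set M : ℝ := L * C + 1 with hM
  have hM1 : (1:ℝ) ≤ M := le_add_of_nonneg_left (mul_nonneg hL0 hC0)
  have hM0 : (0:ℝ) < M := lt_of_lt_of_le one_pos hM1
  have key : ∀ (z : Y) (w : EuclideanSpace ℝ (Fin n)),
      ∃ y, G y = G z + w ∧ dist z y ≤ M * ‖w‖ := by
    intro z w
    obtain ⟨y, hy, hd⟩ := reach (fun i => b.repr w i) Finset.univ z
    have hsum : ∑ i, b.repr w i • v i = w := by
      rw [← hbv]; exact b.sum_repr w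
    have hco : ∑ i, |b.repr w i| ≤ C * ‖w‖ := by
      rw [hC, Finset.sum_mul]
      refine Finset.sum_le_sum fun i _ => ?_
      have h3 := (clm i).le_opNorm w
      have h4 : clm i w = b.repr w i := by simp [hclm]
      rw [h4, Real.norm_eq_abs] at h3
      exact h3
    refine ⟨y, by rw [hy, hsum], ?_⟩
    calc dist z y ≤ L * ∑ i, |b.repr w i| := hd
      _ ≤ L * (C * ‖w‖) := mul_le_mul_of_nonneg_left hco hL0
      _ ≤ M * ‖w‖ := by
          rw [hM, ← mul_assoc]
          nlinarith [norm_nonneg w]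
  constructor
  · intro u
    obtain ⟨z⟩ := ‹Nonempty Y›
    obtain ⟨y, hy, -⟩ := key z (u - G z)
    exact ⟨y, by rw [hy]; abel⟩
  · refine ⟨M⁻¹, inv_pos.mpr hM0, fun z r hr w hw => ?_⟩
    obtain ⟨y, hy, hd⟩ := key z (w - G z)
    have hGy : G y = w := by rw [hy]; abel
    have hnorm : ‖w - G z‖ < M⁻¹ * r := by
      rw [← dist_eq_norm]; exact mem_ball.mp hw
    have : dist z y < r := by
      calc dist z y ≤ M * ‖w - G z‖ := hd
        _ < M * (M⁻¹ * r) := by exact mul_lt_mul_of_pos_left hnorm hM0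
        _ = r := by field_simp
    exact ⟨y, mem_ball.mpr (by rw [dist_comm]; exact this), hGy⟩
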